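/- Let A and B be positive invertible bounded self-adjoint operators on a complex Hilbert space with A − B ≥ m·I for some m > 0, and let σ_B = max of the spectrum of B. Then B⁻¹ − A⁻¹ ≥ (σ_B⁻¹ − (σ_B + m)⁻¹) · I. -/

import Mathlib

theorem inverse_difference_lower_bound_spectral
    {H : Type*} [NormedAddCommGroup H] [InnerProductSpace ℂ H] [CompleteSpace H] [Nontrivial H]
    (A B : H →L[ℂ] H) (hA : IsSelfAdjoint A) (hB : IsSelfAdjoint B)
    (hApos : 0 ≤ A) (hBpos : 0 ≤ B) (hAinv : IsUnit A) (hBinv : IsUnit B)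
    (m : ℝ) (hm : 0 < m) (hAB : m • (1 : H →L[ℂ] H) ≤ A - B) :
    ((sSup (spectrum ℝ B))⁻¹ - (sSup (spectrum ℝ B) + m)⁻¹) • (1 : H →L[ℂ] H) ≤
      Ring.inverse B - Ring.inverse A := by
  set σ : ℝ := sSup (spectrum ℝ B) with hσdef
  have hσnorm : σ = ‖B‖ := by
    refine IsGreatest.csSup_eq ⟨CStarAlgebra.norm_mem_spectrum_of_nonneg hBpos, ?_⟩
    intro x hx
    exact (le_abs_self x).trans (spectrum.norm_le_norm_of_mem hx)
  -- every spectral value is positive and bounded by σ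
  have hspec : ∀ x ∈ spectrum ℝ B, 0 < x ∧ x ≤ σ := by
    intro x hx
    refine ⟨lt_of_le_of_ne (spectrum_nonneg_of_nonneg hBpos hx) ?_, ?_⟩
    · rintro rfl
      exact spectrum.zero_notMem ℝ hBinv hx
    · rw [hσnorm]
      exact (le_abs_self x).trans (spectrum.norm_le_norm_of_mem hx)
  have hσpos : 0 < σ := (hspec _ (CStarAlgebra.norm_mem_spectrum_of_nonneg hBpos)).1.trans_le
    (hspec _ (CStarAlgebra.norm_mem_spectrum_of_nonneg hBpos)).2
  -- B + m • 1 is a positive unit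
  have hm1 : (0 : H →L[ℂ] H) ≤ m • 1 := by
    have : m • (1 : H →L[ℂ] H) =
        star (Real.sqrt m • 1) * (Real.sqrt m • 1) := by
      simp [smul_smul, Real.mul_self_sqrt hm.le]
    rw [this]
    exact star_mul_self_nonneg _
  have hm1unit : IsUnit (m • (1 : H →L[ℂ] H)) := by
    rw [← Algebra.algebraMap_eq_smul_one]
    exact (isUnit_iff_ne_zero.mpr hm.ne').map (algebraMap ℝ (H →L[ℂ] H))
  have hCle : m • (1 : H →L[ℂ] H) ≤ B + m • 1 := le_add_of_nonneg_left hBpos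
  have hCunit : IsUnit (B + m • (1 : H →L[ℂ] H)) :=
    CStarAlgebra.isUnit_of_le _ hCle (hm1unit.isStrictlyPositive hm1)
  have hCpos : (0 : H →L[ℂ] H) ≤ B + m • 1 := hm1.trans hCle
  have hCA : B + m • (1 : H →L[ℂ] H) ≤ A := by
    have := add_le_add_right hAB B
    simpa [sub_add_cancel, add_comm] using this
  -- antitonicity of the inverse
  have hinvle : Ring.inverse A ≤ Ring.inverse (B + m • (1 : H →L[ℂ] H)) := by
    have h := CStarAlgebra.inv_le_inv (A := H →L[ℂ] H)
      (a := hCunit.unit) (b := hAinv.unit)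
      (by simpa [hCunit.unit_spec] using hCpos)
      (by simpa [hCunit.unit_spec, hAinv.unit_spec] using hCA)
    rw [← hAinv.unit_spec, ← hCunit.unit_spec, Ring.inverse_unit, Ring.inverse_unit]
    exact h
  -- continuity facts
  have hcont1 : ContinuousOn (fun t : ℝ => t⁻¹) (spectrum ℝ B) :=
    ContinuousOn.inv₀ continuousOn_id fun x hx => (hspec x hx).1.ne'
  have hcont2 : ContinuousOn (fun t : ℝ => (t + m)⁻¹) (spectrum ℝ B) :=
    ContinuousOn.inv₀ (continuousOn_id.add continuousOn_const)
      fun x hx => (add_pos (hspec x hx).1 hm).ne'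
  -- express the inverses via the continuous functional calculus
  have hinvB : Ring.inverse B = cfc (fun t : ℝ => t⁻¹) B := by
    rw [← hBinv.unit_spec, Ring.inverse_unit]
    exact (cfc_inv_id (R := ℝ) hBinv.unit (by simpa [hBinv.unit_spec] using hB)).symm
  have hC_cfc : cfc (fun t : ℝ => t + m) B = B + m • 1 := by
    have hfun : (fun t : ℝ => t + m) = fun t : ℝ => id t + (fun _ : ℝ => m) t := rfl
    rw [hfun, cfc_add (a := B) id (fun _ => m) continuousOn_id continuousOn_const,
      cfc_id ℝ B, cfc_const m B, Algebra.algebraMap_eq_smul_one]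
  have hinvC : Ring.inverse (B + m • (1 : H →L[ℂ] H)) = cfc (fun t : ℝ => (t + m)⁻¹) B := by
    rw [← hC_cfc,
      ← cfc_inv (R := ℝ) (a := B) (f := fun t : ℝ => t + m)
        (fun x hx => (add_pos (hspec x hx).1 hm).ne')
        (continuousOn_id.add continuousOn_const) hB]
  have hdiff : Ring.inverse B - Ring.inverse (B + m • (1 : H →L[ℂ] H)) =
      cfc (fun t : ℝ => t⁻¹ - (t + m)⁻¹) B := by
    rw [hinvB, hinvC, cfc_sub _ _ B hcont1 hcont2]
  -- pointwise lower bound on the spectrum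
  have hpt : ∀ x ∈ spectrum ℝ B, σ⁻¹ - (σ + m)⁻¹ ≤ x⁻¹ - (x + m)⁻¹ := by
    intro x hx
    obtain ⟨hx0, hxσ⟩ := hspec x hx
    have h1 : x⁻¹ - (x + m)⁻¹ = m / (x * (x + m)) := by
      field_simp
      ring
    have h2 : σ⁻¹ - (σ + m)⁻¹ = m / (σ * (σ + m)) := by
      field_simp
      ring
    rw [h1, h2]
    apply div_le_div_of_nonneg_left hm.le (by positivity)
    have : x + m ≤ σ + m := by linarith
    exact mul_le_mul hxσ this (by positivity) hσpos.le
  have hlow : (σ⁻¹ - (σ + m)⁻¹) • (1 : H →L[ℂ] H) ≤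
      cfc (fun t : ℝ => t⁻¹ - (t + m)⁻¹) B := by
    rw [← Algebra.algebraMap_eq_smul_one]
    exact algebraMap_le_cfc _ _ B hpt (hcont1.sub hcont2) hB
  calc (σ⁻¹ - (σ + m)⁻¹) • (1 : H →L[ℂ] H)
      ≤ Ring.inverse B - Ring.inverse (B + m • (1 : H →L[ℂ] H)) := hdiff ▸ hlow
    _ ≤ Ring.inverse B - Ring.inverse A := by
        exact sub_le_sub_left hinvle _
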